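/- The map sending an integer Z to its (-α)-admissible digit sequence is a bijection between the integers ℤ and the set of finitely-supported (-α)-admissible digit sequences (with the zero sequence representing 0). Equivalently, the value map (b_k) ↦ Σ_k b_k (-1)^{k-1} q_{k-1} is a bijection from finitely-supported (-α)-admissible sequences onto ℤ. -/

import Mathlib

namespace BNA

/-- truncate a digit sequence above index `n` -/
def trunc (n : ℕ) (b : ℕ → ℕ) : ℕ → ℕ := fun k => if k ≤ n then b k else 0

/-- admissible digit sequence -/
def Adm (a : ℕ → ℕ) (b : ℕ → ℕ) : Prop :=
  b 0 = 0 ∧ (∀ k, 1 ≤ k → b k ≤ a k) ∧ (∀ k, 1 ≤ k → b k = a k → b (k + 1) = 0)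

/-- supported on `[0, n]` -/
def Bnd (n : ℕ) (b : ℕ → ℕ) : Prop := ∀ k, n < k → b k = 0

/-- partial value -/
def bval (q : ℕ → ℕ) (n : ℕ) (b : ℕ → ℕ) : ℤ :=
  ∑ k ∈ Finset.range (n + 1), (b k : ℤ) * (-1) ^ (k + 1) * (q k : ℤ)

def lo (q : ℕ → ℕ) (n : ℕ) : ℤ := if Odd n then 1 - q n else 1 - q (n + 1)
def hi (q : ℕ → ℕ) (n : ℕ) : ℤ := if Odd n then q (n + 1) else q n
def lo' (q : ℕ → ℕ) (n : ℕ) : ℤ := if Odd n then 1 - q n else 1 + q n - q (n + 1)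
def hi' (q : ℕ → ℕ) (n : ℕ) : ℤ := if Odd n then q (n + 1) - q n else q n

section basic

variable {a q : ℕ → ℕ}

lemma q_pos (ha : ∀ k, 1 ≤ k → 1 ≤ a k) (hq0 : q 0 = 0) (hq1 : q 1 = 1)
    (hqrec : ∀ k, q (k + 2) = a (k + 1) * q (k + 1) + q k) :
    ∀ k, 1 ≤ k → 1 ≤ q k := by
  intro k hk
  induction k using Nat.strong_induction_on with
  | _ k ih =>
    match k, hk with
    | 1, _ => omega
    | (m+2), _ =>
      rw [hqrec]
      have h1 := ha (m+1) (by omega)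
      have h2 := ih (m+1) (by omega) (by omega)
      nlinarith

lemma q_mono (ha : ∀ k, 1 ≤ k → 1 ≤ a k) (hq0 : q 0 = 0) (hq1 : q 1 = 1)
    (hqrec : ∀ k, q (k + 2) = a (k + 1) * q (k + 1) + q k) :
    ∀ k, q (k + 1) ≤ q (k + 2) := by
  intro k
  rw [hqrec]
  have h1 := ha (k+1) (by omega)
  calc q (k+1) = 1 * q (k+1) := (one_mul _).symm
    _ ≤ a (k+1) * q (k+1) := Nat.mul_le_mul_right _ h1
    _ ≤ a (k+1) * q (k+1) + q k := Nat.le_add_right _ _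

lemma trunc_adm (hAdm : Adm a b) (ha : ∀ k, 1 ≤ k → 1 ≤ a k) (n : ℕ) :
    Adm a (trunc n b) := by
  obtain ⟨h0, h1, h2⟩ := hAdm
  refine ⟨by simp [trunc, h0], fun k hk => ?_, fun k hk hk2 => ?_⟩
  · unfold trunc
    split
    · exact h1 k hk
    · omega
  · unfold trunc at *
    split
    · split at hk2
      · exact h2 k hk hk2
      · omega
    · rfl

lemma trunc_bnd (n : ℕ) (b : ℕ → ℕ) : Bnd n (trunc n b) := by
  intro k hk; simp [trunc]; omega

lemma bval_trunc (q : ℕ → ℕ) (n : ℕ) (b : ℕ → ℕ) :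
    bval q n (trunc n b) = bval q n b := by
  unfold bval
  refine Finset.sum_congr rfl fun k hk => ?_
  simp only [Finset.mem_range] at hk
  simp [trunc, Nat.lt_succ_iff.mp hk]

lemma bval_succ (q : ℕ → ℕ) (n : ℕ) (b : ℕ → ℕ) :
    bval q (n + 1) b = bval q n b + (b (n+1) : ℤ) * (-1) ^ (n + 2) * (q (n+1) : ℤ) :=
  Finset.sum_range_succ _ _

lemma bval_update (q : ℕ → ℕ) (n k : ℕ) (hk : n < k) (b : ℕ → ℕ) (v : ℕ) :
    bval q n (Function.update b k v) = bval q n b := by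
  unfold bval
  refine Finset.sum_congr rfl fun i hi => ?_
  simp only [Finset.mem_range] at hi
  rw [Function.update_of_ne (by omega)]

end basic


variable {a q : ℕ → ℕ}

lemma bounds (ha : ∀ k, 1 ≤ k → 1 ≤ a k) (hq0 : q 0 = 0) (hq1 : q 1 = 1)
    (hqrec : ∀ k, q (k + 2) = a (k + 1) * q (k + 1) + q k) :
    ∀ n b, Adm a b → Bnd n b →
      (lo q n ≤ bval q n b ∧ bval q n b ≤ hi q n) ∧
      ((n = 0 ∨ b n < a n) → lo' q n ≤ bval q n b ∧ bval q n b ≤ hi' q n) := by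
  intro n
  induction n with
  | zero =>
    intro b hAdm _
    have h0 : bval q 0 b = 0 := by simp [bval, hAdm.1]
    simp [lo, hi, lo', hi', hq0, hq1, h0]
  | succ n IH =>
    intro b hAdm hB
    have hA' := trunc_adm hAdm ha n
    have hB' := trunc_bnd n b
    have IH2 := IH (trunc n b) hA' hB'
    rw [bval_trunc] at IH2
    have htr : trunc n b n = b n := by simp [trunc]
    rw [htr] at IH2
    have key := bval_succ q n b
    have hQ1 : (1:ℤ) ≤ (q (n+1) : ℤ) := by
      exact_mod_cast q_pos ha hq0 hq1 hqrec (n+1) (by omega)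
    have hrec : (q (n+2) : ℤ) = (a (n+1) : ℤ) * (q (n+1) : ℤ) + (q n : ℤ) := by
      exact_mod_cast hqrec n
    have hA1 : (1:ℤ) ≤ (a (n+1) : ℤ) := by exact_mod_cast ha (n+1) (by omega)
    have hqn0 : (0:ℤ) ≤ (q n : ℤ) := Int.natCast_nonneg _
    have hprod : (1:ℤ) ≤ (a (n+1) : ℤ) * (q (n+1) : ℤ) := by nlinarith
    have hprod2 : (q (n+1) : ℤ) ≤ (a (n+1) : ℤ) * (q (n+1) : ℤ) := by nlinarith
    have hj : ((b (n+1) : ℤ)) ≤ (a (n+1) : ℤ) := by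
      exact_mod_cast hAdm.2.1 (n+1) (by omega)
    rcases Nat.eq_zero_or_pos (b (n+1)) with hj0 | hj1
    · -- top digit zero
      have hv : bval q (n+1) b = bval q n b := by rw [key, hj0]; push_cast; ring
      rw [hv]
      obtain ⟨hI1, hI2⟩ := IH2.1
      rcases Nat.even_or_odd n with he | ho
      · have h1 : ¬ Odd n := (Nat.not_odd_iff_even).mpr he
        have h2 : Odd (n+1) := Even.add_one he
        simp only [lo, hi, lo', hi', if_pos h2, if_neg h1] at *
        refine ⟨⟨by linarith, by linarith⟩, fun _ => ⟨by linarith, by linarith⟩⟩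
      · have h1 : Odd n := ho
        have h2 : ¬ Odd (n+1) := by simp [Nat.odd_add_one, Nat.not_even_iff_odd.mpr ho]
        simp only [lo, hi, lo', hi', if_pos h1, if_neg h2] at *
        refine ⟨⟨by linarith, by linarith⟩, fun _ => ⟨by linarith, by linarith⟩⟩
    · -- top digit positive
      have hbn : n = 0 ∨ b n < a n := by
        rcases Nat.eq_zero_or_pos n with h | h
        · exact Or.inl h
        · right
          have hle := hAdm.2.1 n h
          rcases lt_or_eq_of_le hle with h' | h'
          · exact h'
          · exact absurd (hAdm.2.2 n h h') (by omega)
      obtain ⟨hJ1, hJ2⟩ := IH2.2 hbn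
      have hj1' : (1:ℤ) ≤ (b (n+1) : ℤ) := by exact_mod_cast hj1
      have hjq : (q (n+1):ℤ) ≤ (b (n+1):ℤ) * (q (n+1):ℤ) :=
        le_mul_of_one_le_left (by linarith) hj1'
      have hjq2 : (b (n+1):ℤ) * (q (n+1):ℤ) ≤ (a (n+1):ℤ) * (q (n+1):ℤ) :=
        mul_le_mul_of_nonneg_right hj (by linarith)
      have hjq3 : b (n+1) < a (n+1) →
          (b (n+1):ℤ) * (q (n+1):ℤ) ≤ ((a (n+1):ℤ) - 1) * (q (n+1):ℤ) := by
        intro h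
        have h' : (b (n+1):ℤ) < (a (n+1):ℤ) := by exact_mod_cast h
        exact mul_le_mul_of_nonneg_right (by linarith) (by linarith)
      rcases Nat.even_or_odd n with he | ho
      · -- n even: sign of position n+1 is +1
        have h1 : ¬ Odd n := (Nat.not_odd_iff_even).mpr he
        have h2 : Odd (n+1) := Even.add_one he
        have hsgn : ((-1:ℤ))^(n+2) = 1 := Even.neg_one_pow (by
          have : Even (n+2) := he.add even_two
          exact this)
        rw [hsgn] at key
        simp only [lo, hi, lo', hi', if_pos h2, if_neg h1] at *
        constructor
        · constructor <;> linarith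
        · intro h
          have h3 : b (n+1) < a (n+1) := by
            rcases h with h | h
            · omega
            · exact h
          have := hjq3 h3
          constructor <;> linarith
      · -- n odd: sign of position n+1 is -1
        have h1 : Odd n := ho
        have h2 : ¬ Odd (n+1) := by simp [Nat.odd_add_one, Nat.not_even_iff_odd.mpr ho]
        have hsgn : ((-1:ℤ))^(n+2) = -1 := Odd.neg_one_pow (by
          have : Odd (n+2) := by
            rcases ho with ⟨m, hm⟩; exact ⟨m+1, by omega⟩
          exact this)
        rw [hsgn] at key
        simp only [lo, hi, lo', hi', if_pos h1, if_neg h2] at *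
        constructor
        · constructor <;> linarith
        · intro h
          have h3 : b (n+1) < a (n+1) := by
            rcases h with h | h
            · omega
            · exact h
          have := hjq3 h3
          constructor <;> linarith

lemma inj_top (ha : ∀ k, 1 ≤ k → 1 ≤ a k) (hq0 : q 0 = 0) (hq1 : q 1 = 1)
    (hqrec : ∀ k, q (k + 2) = a (k + 1) * q (k + 1) + q k)
    (n : ℕ) (b c : ℕ → ℕ) (hab : Adm a b) (hac : Adm a c)
    (hbb : Bnd (n+1) b) (hbc : Bnd (n+1) c) (hlt : b (n+1) < c (n+1)) :
    bval q (n+1) b ≠ bval q (n+1) c := by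
  have hQ1 : (1:ℤ) ≤ (q (n+1) : ℤ) := by
    exact_mod_cast q_pos ha hq0 hq1 hqrec (n+1) (by omega)
  have hqn0 : (0:ℤ) ≤ (q n : ℤ) := Int.natCast_nonneg _
  have Hb := (bounds ha hq0 hq1 hqrec n (trunc n b) (trunc_adm hab ha n) (trunc_bnd n b)).1
  rw [bval_trunc] at Hb
  have hcn : n = 0 ∨ c n < a n := by
    rcases Nat.eq_zero_or_pos n with h | h
    · exact Or.inl h
    · right
      have hle := hac.2.1 n h
      rcases lt_or_eq_of_le hle with h' | h'
      · exact h'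
      · exact absurd (hac.2.2 n h h') (by omega)
  have Hc := (bounds ha hq0 hq1 hqrec n (trunc n c) (trunc_adm hac ha n) (trunc_bnd n c)).2
  rw [bval_trunc] at Hc
  have htr : trunc n c n = c n := by simp [trunc]
  rw [htr] at Hc
  have HJc := Hc hcn
  have keyb := bval_succ q n b
  have keyc := bval_succ q n c
  have hj'1 : (b (n+1):ℤ) + 1 ≤ (c (n+1):ℤ) := by exact_mod_cast hlt
  have hb0 : (0:ℤ) ≤ (b (n+1):ℤ) := Int.natCast_nonneg _
  have hmul : ((b (n+1):ℤ) + 1) * (q (n+1):ℤ) ≤ (c (n+1):ℤ) * (q (n+1):ℤ) :=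
    mul_le_mul_of_nonneg_right hj'1 (by linarith)
  have hmulb : (q (n+1):ℤ) * 0 ≤ (b (n+1):ℤ) * (q (n+1):ℤ) := by
    rw [mul_zero]; positivity
  rcases Nat.even_or_odd n with he | ho
  · have h1 : ¬ Odd n := (Nat.not_odd_iff_even).mpr he
    have hsgn : ((-1:ℤ))^(n+2) = 1 := Even.neg_one_pow (he.add even_two)
    rw [hsgn] at keyb keyc
    simp only [lo, hi, lo', hi', if_neg h1] at Hb HJc
    intro heq
    linarith [Hb.2, HJc.1]
  · have h1 : Odd n := ho
    have hsgn : ((-1:ℤ))^(n+2) = -1 := Odd.neg_one_pow (by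
      rcases ho with ⟨m, hm⟩; exact ⟨m+1, by omega⟩)
    rw [hsgn] at keyb keyc
    simp only [lo, hi, lo', hi', if_pos h1] at Hb HJc
    intro heq
    linarith [Hb.1, HJc.2]

lemma inj_lem (ha : ∀ k, 1 ≤ k → 1 ≤ a k) (hq0 : q 0 = 0) (hq1 : q 1 = 1)
    (hqrec : ∀ k, q (k + 2) = a (k + 1) * q (k + 1) + q k) :
    ∀ n b c, Adm a b → Adm a c → Bnd n b → Bnd n c →
      bval q n b = bval q n c → b = c := by
  intro n
  induction n with
  | zero =>
    intro b c hab hac hbb hbc _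
    funext k
    match k with
    | 0 => rw [hab.1, hac.1]
    | (k+1) => rw [hbb (k+1) (by omega), hbc (k+1) (by omega)]
  | succ n IH =>
    intro b c hab hac hbb hbc hval
    have htop : b (n+1) = c (n+1) := by
      rcases lt_trichotomy (b (n+1)) (c (n+1)) with h | h | h
      · exact absurd hval (inj_top ha hq0 hq1 hqrec n b c hab hac hbb hbc h)
      · exact h
      · exact absurd hval.symm (inj_top ha hq0 hq1 hqrec n c b hac hab hbc hbb h)
    have hvn : bval q n b = bval q n c := by
      rw [bval_succ, bval_succ, htop] at hval
      linarith
    have hteq := IH (trunc n b) (trunc n c) (trunc_adm hab ha n) (trunc_adm hac ha n)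
      (trunc_bnd n b) (trunc_bnd n c) (by rw [bval_trunc, bval_trunc]; exact hvn)
    funext k
    rcases le_or_gt k n with hk | hk
    · have := congrFun hteq k
      simpa [trunc, hk] using this
    · rcases Nat.eq_or_lt_of_le hk with hk' | hk'
      · rw [← hk']; exact htop
      · rw [hbb k hk', hbc k hk']

lemma adm_update (ha : ∀ k, 1 ≤ k → 1 ≤ a k) {n : ℕ} {b : ℕ → ℕ}
    (hab : Adm a b) (hbb : Bnd n b) (hbn : n = 0 ∨ b n < a n)
    (jn : ℕ) (hj : jn ≤ a (n+1)) :
    Adm a (Function.update b (n+1) jn) ∧ Bnd (n+1) (Function.update b (n+1) jn) := by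
  set c := Function.update b (n+1) jn with hc
  have hck : ∀ k, k ≠ n + 1 → c k = b k := fun k hk => Function.update_of_ne hk _ _
  have hcn1 : c (n+1) = jn := Function.update_self _ _ _
  refine ⟨⟨?_, ?_, ?_⟩, ?_⟩
  · rw [hck 0 (by omega)]; exact hab.1
  · intro k hk
    rcases eq_or_ne k (n+1) with h | h
    · rw [h, hcn1]; exact hj
    · rw [hck k h]; exact hab.2.1 k hk
  · intro k hk hk2
    rcases eq_or_ne k (n+1) with h | h
    · rw [h]; rw [hck (n+2) (by omega)]; exact hbb (n+2) (by omega)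
    · rcases eq_or_ne k n with h' | h'
      · exfalso
        rw [hck k h, h'] at hk2
        rcases hbn with h'' | h''
        · omega
        · omega
      · rw [hck (k+1) (by omega)]
        rw [hck k h] at hk2
        exact hab.2.2 k hk hk2
  · intro k hk
    rw [hck k (by omega)]
    exact hbb k (by omega)

set_option maxHeartbeats 2000000 in
lemma exist_lem (ha : ∀ k, 1 ≤ k → 1 ≤ a k) (hq0 : q 0 = 0) (hq1 : q 1 = 1)
    (hqrec : ∀ k, q (k + 2) = a (k + 1) * q (k + 1) + q k) :
    ∀ n Z, lo q n ≤ Z → Z ≤ hi q n →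
      ∃ b, Adm a b ∧ Bnd n b ∧ bval q n b = Z ∧
        (lo' q n ≤ Z → Z ≤ hi' q n → (n = 0 ∨ b n < a n)) := by
  intro n
  induction n with
  | zero =>
    intro Z h1 h2
    simp only [lo, hi] at h1 h2
    rw [if_neg (by decide), hq1] at h1
    rw [if_neg (by decide), hq0] at h2
    push_cast at h1 h2
    have hZ : Z = 0 := by omega
    refine ⟨fun _ => 0, ⟨rfl, fun k _ => Nat.zero_le _, fun k _ _ => rfl⟩,
      fun k _ => rfl, by simp [bval, hZ], fun _ _ => Or.inl rfl⟩
  | succ n IH =>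
    intro Z h1 h2
    have hQ1 : (1:ℤ) ≤ (q (n+1) : ℤ) := by
      exact_mod_cast q_pos ha hq0 hq1 hqrec (n+1) (by omega)
    have hrec : (q (n+2) : ℤ) = (a (n+1) : ℤ) * (q (n+1) : ℤ) + (q n : ℤ) := by
      exact_mod_cast hqrec n
    have hA1 : (1:ℤ) ≤ (a (n+1) : ℤ) := by exact_mod_cast ha (n+1) (by omega)
    have hqn0 : (0:ℤ) ≤ (q n : ℤ) := Int.natCast_nonneg _
    rcases Nat.even_or_odd n with he | ho
    · -- n even, sign at position n+1 is +1
      have h1n : ¬ Odd n := Nat.not_odd_iff_even.mpr he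
      have h2n : Odd (n+1) := Even.add_one he
      have hsgn : ((-1:ℤ))^(n+2) = 1 := Even.neg_one_pow (he.add even_two)
      simp only [lo, hi, lo', hi', if_pos h2n] at h1 h2 ⊢
      rcases le_or_gt Z (q n : ℤ) with hZ | hZ
      · -- Z already in level-n interval
        obtain ⟨b, hab, hbb, hbv, _⟩ := IH Z (by simp only [lo, if_neg h1n]; exact h1)
          (by simp only [hi, if_neg h1n]; exact hZ)
        refine ⟨b, hab, fun k hk => hbb k (by omega), ?_, ?_⟩
        · rw [bval_succ, hbb (n+1) (by omega)]; push_cast; linarith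
        · intro _ _
          right
          rw [hbb (n+1) (by omega)]
          exact ha (n+1) (by omega)
      · -- Z above level-n interval
        set Q : ℤ := (q (n+1) : ℤ) with hQ
        set x : ℤ := Z - (q n : ℤ) with hx
        have hx1 : 1 ≤ x := by omega
        set d : ℤ := (x - 1) / Q with hd
        set r : ℤ := (x - 1) % Q with hr
        have hdr : Q * d + r = x - 1 := Int.mul_ediv_add_emod _ _
        have hr0 : 0 ≤ r := Int.emod_nonneg _ (by omega)
        have hrQ : r < Q := Int.emod_lt_of_pos _ (by omega)
        have hd0 : 0 ≤ d := Int.ediv_nonneg (by omega) (by omega)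
        have hja : d + 1 ≤ (a (n+1) : ℤ) := by
          by_contra hcon
          push_neg at hcon
          have had : (a (n+1) : ℤ) ≤ d := by omega
          have := mul_le_mul_of_nonneg_left had (le_of_lt (by omega : (0:ℤ) < Q))
          have hxa : x ≤ (a (n+1) : ℤ) * Q := by linarith [h2]
          nlinarith
        set Z' : ℤ := Z - (d + 1) * Q with hZ'
        have hZ'eq : Z' = (q n : ℤ) + 1 + r - Q := by
          rw [hZ']; linarith [hdr]
        obtain ⟨b, hab, hbb, hbv, hcl⟩ := IH Z'
          (by simp only [lo, if_neg h1n]; omega)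
          (by simp only [hi, if_neg h1n]; omega)
        have hbn : n = 0 ∨ b n < a n := hcl
          (by simp only [lo', if_neg h1n]; omega)
          (by simp only [hi', if_neg h1n]; omega)
        set jn : ℕ := (d + 1).toNat with hjn
        have hjnc : (jn : ℤ) = d + 1 := Int.toNat_of_nonneg (by omega)
        have hjna : jn ≤ a (n+1) := by exact_mod_cast hjnc ▸ hja
        obtain ⟨hadm, hbnd⟩ := adm_update ha hab hbb hbn jn hjna
        refine ⟨Function.update b (n+1) jn, hadm, hbnd, ?_, ?_⟩
        · rw [bval_succ, bval_update q n (n+1) (by omega), Function.update_self, hsgn, hjnc, hbv]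
          linarith
        · intro _ hhi
          right
          rw [Function.update_self]
          have : d + 1 < (a (n+1) : ℤ) := by
            by_contra hcon
            push_neg at hcon
            have had : (a (n+1) : ℤ) - 1 ≤ d := by omega
            have := mul_le_mul_of_nonneg_left had (le_of_lt (by omega : (0:ℤ) < Q))
            have hxa : x ≤ ((a (n+1) : ℤ) - 1) * Q := by linarith [hhi]
            nlinarith
          omega
    · -- n odd, sign at position n+1 is -1
      have h1n : Odd n := ho
      have h2n : ¬ Odd (n+1) := by simp [Nat.odd_add_one, Nat.not_even_iff_odd.mpr ho]
      have hsgn : ((-1:ℤ))^(n+2) = -1 := Odd.neg_one_pow (by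
        rcases ho with ⟨m, hm⟩; exact ⟨m+1, by omega⟩)
      simp only [lo, hi, lo', hi', if_neg h2n] at h1 h2 ⊢
      rcases le_or_gt ((1:ℤ) - (q n : ℤ)) Z with hZ | hZ
      · obtain ⟨b, hab, hbb, hbv, _⟩ := IH Z (by simp only [lo, if_pos h1n]; exact hZ)
          (by simp only [hi, if_pos h1n]; exact h2)
        refine ⟨b, hab, fun k hk => hbb k (by omega), ?_, ?_⟩
        · rw [bval_succ, hbb (n+1) (by omega)]; push_cast; linarith
        · intro _ _
          right
          rw [hbb (n+1) (by omega)]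
          exact ha (n+1) (by omega)
      · set Q : ℤ := (q (n+1) : ℤ) with hQ
        set x : ℤ := 1 - (q n : ℤ) - Z with hx
        have hx1 : 1 ≤ x := by omega
        set d : ℤ := (x - 1) / Q with hd
        set r : ℤ := (x - 1) % Q with hr
        have hdr : Q * d + r = x - 1 := Int.mul_ediv_add_emod _ _
        have hr0 : 0 ≤ r := Int.emod_nonneg _ (by omega)
        have hrQ : r < Q := Int.emod_lt_of_pos _ (by omega)
        have hd0 : 0 ≤ d := Int.ediv_nonneg (by omega) (by omega)
        have hja : d + 1 ≤ (a (n+1) : ℤ) := by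
          by_contra hcon
          push_neg at hcon
          have had : (a (n+1) : ℤ) ≤ d := by omega
          have := mul_le_mul_of_nonneg_left had (le_of_lt (by omega : (0:ℤ) < Q))
          have hxa : x ≤ (a (n+1) : ℤ) * Q := by linarith [h1]
          nlinarith
        set Z' : ℤ := Z + (d + 1) * Q with hZ'
        have hZ'eq : Z' = Q - (q n : ℤ) - r := by
          rw [hZ']; linarith [hdr]
        obtain ⟨b, hab, hbb, hbv, hcl⟩ := IH Z'
          (by simp only [lo, if_pos h1n]; omega)
          (by simp only [hi, if_pos h1n]; omega)
        have hbn : n = 0 ∨ b n < a n := hcl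
          (by simp only [lo', if_pos h1n]; omega)
          (by simp only [hi', if_pos h1n]; omega)
        set jn : ℕ := (d + 1).toNat with hjn
        have hjnc : (jn : ℤ) = d + 1 := Int.toNat_of_nonneg (by omega)
        have hjna : jn ≤ a (n+1) := by exact_mod_cast hjnc ▸ hja
        obtain ⟨hadm, hbnd⟩ := adm_update ha hab hbb hbn jn hjna
        refine ⟨Function.update b (n+1) jn, hadm, hbnd, ?_, ?_⟩
        · rw [bval_succ, bval_update q n (n+1) (by omega), Function.update_self, hsgn, hjnc, hbv]
          linarith
        · intro hlo _
          right
          rw [Function.update_self]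
          have : d + 1 < (a (n+1) : ℤ) := by
            by_contra hcon
            push_neg at hcon
            have had : (a (n+1) : ℤ) - 1 ≤ d := by omega
            have := mul_le_mul_of_nonneg_left had (le_of_lt (by omega : (0:ℤ) < Q))
            have hxa : x ≤ ((a (n+1) : ℤ) - 1) * Q := by linarith [hlo]
            nlinarith
          omega

lemma q_big (ha : ∀ k, 1 ≤ k → 1 ≤ a k) (hq0 : q 0 = 0) (hq1 : q 1 = 1)
    (hqrec : ∀ k, q (k + 2) = a (k + 1) * q (k + 1) + q k) :
    ∀ m, m + 1 ≤ q (2 * m + 1) := by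
  intro m
  induction m with
  | zero => simpa [hq1] using le_refl 1
  | succ m IH =>
    have h : 2 * (m + 1) + 1 = (2 * m + 1) + 2 := by ring
    rw [h, hqrec]
    have h1 := ha (2*m + 2) (by omega)
    have h2 := q_pos ha hq0 hq1 hqrec (2*m + 2) (by omega)
    have h3 : 2*m + 1 + 1 = 2*m+2 := by omega
    rw [h3]
    nlinarith

lemma finsum_eq_bval (q : ℕ → ℕ) (n : ℕ) (b : ℕ → ℕ) (hB : Bnd n b) :
    ∑ᶠ k, ((b k : ℤ) * (-1) ^ (k + 1) * (q k : ℤ)) = bval q n b := by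
  rw [bval]
  apply finsum_eq_finset_sum_of_support_subset
  intro k hk
  simp only [Finset.coe_range, Set.mem_Iio]
  by_contra hcon
  have : b k = 0 := hB k (by omega)
  simp [this] at hk

end BNA

/-- The value map `(b_k) ↦ Σ b_k (-1)^{k-1} q_{k-1}` is a bijection between
the finitely supported (-α)-admissible digit sequences and ℤ.  (`q k` is the
paper's `q_{k-1}`; digits are indexed from 1, with `b 0 = 0`.) -/
theorem base_neg_alpha_bijection (a q : ℕ → ℕ)
    (ha : ∀ k, 1 ≤ k → 1 ≤ a k)
    (hq0 : q 0 = 0) (hq1 : q 1 = 1)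
    (hqrec : ∀ k, q (k + 2) = a (k + 1) * q (k + 1) + q k) :
    Function.Bijective
      (fun b : {b : ℕ → ℕ //
          b 0 = 0 ∧ (Function.support b).Finite ∧
          (∀ k, 1 ≤ k → b k ≤ a k) ∧
          (∀ k, 1 ≤ k → b k = a k → b (k + 1) = 0)} =>
        ∑ᶠ k, (b.1 k : ℤ) * (-1) ^ (k + 1) * (q k : ℤ)) := by
  constructor
  · -- injectivity
    rintro ⟨b, hb0, hbfin, hble, hbcons⟩ ⟨c, hc0, hcfin, hcle, hccons⟩ h
    simp only at h
    set n : ℕ := (hbfin.toFinset ∪ hcfin.toFinset).sup id with hn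
    have hBb : BNA.Bnd n b := by
      intro k hk
      by_contra hcon
      have hkmem : k ∈ hbfin.toFinset ∪ hcfin.toFinset := by
        simp [Set.Finite.mem_toFinset, Function.mem_support, hcon]
      have := Finset.le_sup (f := id) hkmem
      simp only [id] at this
      omega
    have hBc : BNA.Bnd n c := by
      intro k hk
      by_contra hcon
      have hkmem : k ∈ hbfin.toFinset ∪ hcfin.toFinset := by
        simp [Set.Finite.mem_toFinset, Function.mem_support, hcon]
      have := Finset.le_sup (f := id) hkmem
      simp only [id] at this
      omega
    rw [BNA.finsum_eq_bval q n b hBb, BNA.finsum_eq_bval q n c hBc] at h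
    have := BNA.inj_lem ha hq0 hq1 hqrec n b c ⟨hb0, hble, hbcons⟩ ⟨hc0, hcle, hccons⟩ hBb hBc h
    exact Subtype.ext this
  · -- surjectivity
    intro Z
    set m : ℕ := Z.natAbs with hm
    set n : ℕ := 2 * m + 1 with hn
    have hodd : Odd n := ⟨m, by omega⟩
    have hqb : (m : ℤ) + 1 ≤ (q n : ℤ) := by
      exact_mod_cast BNA.q_big ha hq0 hq1 hqrec m
    have hmono : (q n : ℤ) ≤ (q (n+1) : ℤ) := by
      have : n + 1 = (2*m) + 2 := by omega
      rw [this]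
      exact_mod_cast BNA.q_mono ha hq0 hq1 hqrec (2*m)
    have hZm : -(m : ℤ) ≤ Z ∧ Z ≤ (m : ℤ) := by
      constructor <;> omega
    obtain ⟨b, hab, hbb, hbv, _⟩ := BNA.exist_lem ha hq0 hq1 hqrec n Z
      (by simp only [BNA.lo, if_pos hodd]; omega)
      (by simp only [BNA.hi, if_pos hodd]; omega)
    refine ⟨⟨b, hab.1, ?_, hab.2.1, hab.2.2⟩, ?_⟩
    · apply Set.Finite.subset (Finset.range (n+1)).finite_toSet
      intro k hk
      simp only [Finset.coe_range, Set.mem_Iio]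
      by_contra hcon
      exact hk (hbb k (by omega))
    · simp only
      rw [BNA.finsum_eq_bval q n b hbb]
      exact hbv
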